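/- Every finite connected simple graph G admits a smooth travel groupoid: there exists a binary operation * on V(G) satisfying (t1), (t2), and (t4), such that E(G) = {{u,v} | u ≠ v, u*v = v}. -/

import Mathlib

open SimpleGraph

section
variable {V : Type*} (G : SimpleGraph V) (r : V) (p : V → V)

/-- The parent-tree graph. -/
def STG.T (hp : ∀ v, v ≠ r → G.Adj v (p v)) : SimpleGraph V where
  Adj a b := (a ≠ r ∧ b = p a) ∨ (b ≠ r ∧ a = p b)
  symm := by constructor; intro a b h; tauto
  loopless := by
    constructor; intro a h
    rcases h with ⟨ha, hb⟩ | ⟨ha, hb⟩ <;>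
      · have := hp a ha; rw [← hb] at this; exact G.irrefl this

variable (hp : ∀ v, v ≠ r → G.Adj v (p v))
    (hd : ∀ v, v ≠ r → G.dist r (p v) < G.dist r v)

theorem STG.T_le : STG.T G r p hp ≤ G := by
  intro a b h
  rcases h with ⟨ha, hb⟩ | ⟨ha, hb⟩
  · exact hb ▸ hp a ha
  · exact (hb ▸ hp b ha).symm

include hd in
theorem STG.T_connected [Nonempty V] : (STG.T G r p hp).Connected := by
  have key : ∀ n (v : V), G.dist r v ≤ n → (STG.T G r p hp).Reachable v r := by
    intro n
    induction n with
    | zero =>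
      intro v hv
      by_cases hvr : v = r
      · subst hvr; exact Reachable.refl _
      · have := hd v hvr; omega
    | succ n ih =>
      intro v hv
      by_cases hvr : v = r
      · subst hvr; exact Reachable.refl _
      · have h1 : (STG.T G r p hp).Adj v (p v) := Or.inl ⟨hvr, rfl⟩
        have h2 := hd v hvr
        exact (h1.reachable).trans (ih (p v) (by omega))
  constructor
  intro a b
  exact (key _ a le_rfl).trans (key _ b le_rfl).symm

end

section
variable {V : Type*} {G : SimpleGraph V} {r : V} {p : V → V}
variable (hp : ∀ v, v ≠ r → G.Adj v (p v))
    (hd : ∀ v, v ≠ r → G.dist r (p v) < G.dist r v)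

include hd in
theorem STG.T_cycle_aux {x : V} (c : (STG.T G r p hp).Walk x x) (hc : c.IsCycle)
    (hmax : ∀ z ∈ c.support, G.dist r z ≤ G.dist r x) : False := by
  cases c with
  | nil => have := hc.three_le_length; simp at this
  | @cons _ s _ h q =>
    have hxs : x ≠ s := h.ne
    obtain ⟨t, h₂, q₂, hq₂⟩ := SimpleGraph.Walk.exists_eq_cons_of_ne hxs q.reverse
    have hs : s ∈ (SimpleGraph.Walk.cons h q).support := by
      simp [SimpleGraph.Walk.support_cons]
    have ht : t ∈ (SimpleGraph.Walk.cons h q).support := by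
      have : t ∈ q.reverse.support := by rw [hq₂]; simp [SimpleGraph.Walk.support_cons]
      rw [SimpleGraph.Walk.support_reverse, List.mem_reverse] at this
      simp [SimpleGraph.Walk.support_cons]; exact Or.inr this
    have hds : G.dist r s ≤ G.dist r x := hmax s hs
    have hdt : G.dist r t ≤ G.dist r x := hmax t ht
    have hsp : s = p x := by
      rcases h with ⟨_, h1⟩ | ⟨h1, h2⟩
      · exact h1
      · have := hd s h1; rw [← h2] at this; omega
    have htp : t = p x := by
      rcases h₂ with ⟨_, h1⟩ | ⟨h1, h2⟩
      · exact h1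
      · have := hd t h1; rw [← h2] at this; omega
    have hst : s = t := hsp.trans htp.symm
    have hnd : (SimpleGraph.Walk.cons h q).edges.Nodup := hc.isCircuit.isTrail.edges_nodup
    rw [SimpleGraph.Walk.edges_cons] at hnd
    have hmem : s(x, t) ∈ q.edges := by
      have : s(x, t) ∈ q.reverse.edges := by rw [hq₂]; simp
      rwa [SimpleGraph.Walk.edges_reverse, List.mem_reverse] at this
    rw [← hst] at hmem
    exact (List.nodup_cons.mp hnd).1 hmem

include hd in
theorem STG.T_acyclic : (STG.T G r p hp).IsAcyclic := by
  classical
  intro a c hc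
  have hne : c.support.tail ≠ [] := by
    have h1 : c.support.tail.length = c.length := by
      simp [List.length_tail, c.length_support]
    have h2 := hc.three_le_length
    intro h
    rw [h] at h1; simp at h1; omega
  obtain ⟨z0, hz0⟩ := List.exists_mem_of_ne_nil _ hne
  obtain ⟨x, hx, hxmax⟩ := Finset.exists_max_image (c.support.tail).toFinset (G.dist r)
    ⟨z0, List.mem_toFinset.mpr hz0⟩
  rw [List.mem_toFinset] at hx
  have hxs : x ∈ c.support := by
    rw [c.support_eq_cons]; exact List.mem_cons_of_mem _ hx
  refine STG.T_cycle_aux hp hd (c.rotate x hxs) (hc.rotate hxs) ?_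
  intro z hz
  rw [(c.rotate x hxs).support_eq_cons, List.mem_cons] at hz
  rcases hz with rfl | hz
  · exact le_refl _
  · have := (c.support_rotate x hxs).mem_iff.mp hz
    exact hxmax z (List.mem_toFinset.mpr this)
end

open SimpleGraph

namespace STG
section
variable {V : Type*} [DecidableEq V] {G T : SimpleGraph V} (hle : T ≤ G) (hT : T.IsTree)

/-- The canonical tree path. -/
noncomputable def tp (a b : V) : T.Walk a b := (hT.existsUnique_path a b).choose

lemma tp_isPath (a b : V) : (tp hT a b).IsPath := (hT.existsUnique_path a b).choose_spec.1

lemma tp_uniq {a b : V} (q : T.Walk a b) (hq : q.IsPath) : q = tp hT a b :=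
  (hT.existsUnique_path a b).choose_spec.2 q hq

/-- Support list of the canonical tree path. -/
noncomputable def P (a b : V) : List V := (tp hT a b).support

lemma P_nodup (a b : V) : (P hT a b).Nodup := (tp_isPath hT a b).support_nodup

lemma P_rev (a b : V) : P hT b a = (P hT a b).reverse := by
  have h : (tp hT a b).reverse = tp hT b a := tp_uniq hT _ (tp_isPath hT a b).reverse
  rw [P, P, ← h, SimpleGraph.Walk.support_reverse]

lemma P_head (a b : V) : P hT a b = a :: (P hT a b).tail := (tp hT a b).support_eq_cons

lemma start_mem_P (a b : V) : a ∈ P hT a b := (tp hT a b).start_mem_support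

lemma end_mem_P (a b : V) : b ∈ P hT a b := (tp hT a b).end_mem_support

lemma P_split {a b y : V} (hy : y ∈ P hT a b) :
    P hT a b = P hT a y ++ (P hT y b).tail := by
  have h1 : (tp hT a b).takeUntil y hy = tp hT a y :=
    tp_uniq hT _ ((tp_isPath hT a b).takeUntil hy)
  have h2 : (tp hT a b).dropUntil y hy = tp hT y b :=
    tp_uniq hT _ ((tp_isPath hT a b).dropUntil hy)
  conv_lhs => rw [P, ← (tp hT a b).take_spec hy]
  rw [SimpleGraph.Walk.support_append, h1, h2]; rfl

lemma P_union {w v : V} (t : V) {z : V} (hz : z ∈ P hT w v) :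
    z ∈ P hT w t ∨ z ∈ P hT t v := by
  have hb : ((tp hT w t).append (tp hT t v)).bypass = tp hT w v :=
    tp_uniq hT _ (SimpleGraph.Walk.bypass_isPath _)
  rw [P, ← hb] at hz
  have := SimpleGraph.Walk.support_bypass_subset _ hz
  rw [SimpleGraph.Walk.support_append] at this
  rcases List.mem_append.mp this with h | h
  · exact Or.inl h
  · exact Or.inr (List.tail_subset _ h)

include hle in
lemma exists_adj_mem_P {a b : V} (hne : a ≠ b) : ∃ z ∈ P hT a b, G.Adj a z := by
  obtain ⟨s, h, q, hq⟩ := SimpleGraph.Walk.exists_eq_cons_of_ne hne (tp hT a b)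
  refine ⟨s, ?_, hle h⟩
  rw [P, hq, SimpleGraph.Walk.support_cons]
  exact List.mem_cons_of_mem _ q.start_mem_support

open Classical in
/-- The travel groupoid operation: last `G`-neighbor of `u` on the tree path to `v`. -/
noncomputable def op (G : SimpleGraph V) (hT : T.IsTree) (u v : V) : V :=
  (((P hT u v).filter (fun z => G.Adj u z)).getLast?).getD u

open Classical in
lemma op_self (u : V) : op G hT u u = u := by
  have h : tp hT u u = SimpleGraph.Walk.nil := (tp_uniq hT _ (by simp)).symm
  rw [op, P, h]
  simp [SimpleGraph.Walk.support_nil, G.irrefl]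

include hle in
open Classical in
lemma op_mem_adj {u v : V} (hne : u ≠ v) :
    op G hT u v ∈ P hT u v ∧ G.Adj u (op G hT u v) := by
  obtain ⟨z, hz, haz⟩ := exists_adj_mem_P hle hT hne
  have hzf : z ∈ (P hT u v).filter (fun z => G.Adj u z) :=
    List.mem_filter.mpr ⟨hz, by simp [haz]⟩
  have hfne : (P hT u v).filter (fun z => G.Adj u z) ≠ [] := by
    intro h; rw [h] at hzf; exact List.not_mem_nil hzf
  have hl := List.getLast?_eq_getLast hfne
  rw [op, hl, Option.getD_some]
  have := List.getLast_mem hfne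
  have hmf := List.mem_filter.mp this
  exact ⟨hmf.1, by simpa using hmf.2⟩

open Classical in
lemma op_eq_of_adj {u v : V} (h : G.Adj u v) : op G hT u v = v := by
  have hrev : (P hT u v).reverse = v :: (P hT v u).tail := by
    rw [← P_rev hT]; exact P_head hT v u
  rw [op, ← List.head?_reverse, ← List.filter_reverse, hrev]
  simp [h]

include hle in
open Classical in
lemma op_eq_self_iff {u v : V} : op G hT u v = u ↔ u = v := by
  constructor
  · intro h
    by_contra hne
    have := (op_mem_adj hle hT hne).2
    rw [h] at this
    exact G.irrefl this
  · intro h; subst h; exact op_self hT u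

/-- Pure tree combinatorics: if `x ∈ P a b ∩ P a c` and `y ∈ P a b ∩ P c b`
then `x` comes before `y`, i.e. `x ∈ P a y`. -/
lemma mem_P_of_between {a b c x y : V} (hxab : x ∈ P hT a b) (hxac : x ∈ P hT a c)
    (hyab : y ∈ P hT a b) (hycb : y ∈ P hT c b) : x ∈ P hT a y := by
  by_contra hnx
  have hsplit1 : P hT a b = P hT a y ++ (P hT y b).tail := P_split hT hyab
  have hxyb : x ∈ (P hT y b).tail := by
    rw [hsplit1] at hxab
    rcases List.mem_append.mp hxab with h | h
    · exact absurd h hnx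
    · exact h
  have hxyb' : x ∈ P hT y b := List.tail_subset _ hxyb
  have hxy : x ≠ y := by
    rintro rfl
    exact hnx (end_mem_P hT a x)
  -- P a x = P a y ++ (P y x).tail
  have e1 : P hT a b = P hT a x ++ (P hT x b).tail := P_split hT hxab
  have e2 : P hT y b = P hT y x ++ (P hT x b).tail := P_split hT hxyb'
  have e2t : (P hT y b).tail = (P hT y x).tail ++ (P hT x b).tail := by
    rw [e2]
    conv_lhs => rw [P_head hT y x]
    rfl
  have e3 : P hT a b = (P hT a y ++ (P hT y x).tail) ++ (P hT x b).tail := by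
    rw [hsplit1, e2t, List.append_assoc]
  have e4 : P hT a x = P hT a y ++ (P hT y x).tail :=
    List.append_left_injective _ (e1.symm.trans e3)
  have hyax : y ∈ P hT a x := by
    rw [e4]; exact List.mem_append.mpr (Or.inl (end_mem_P hT a y))
  -- y ∈ P a c
  have hyac : y ∈ P hT a c := by
    rw [P_split hT hxac]
    exact List.mem_append.mpr (Or.inl hyax)
  have hyca : y ∈ P hT c a := by rw [P_rev hT]; exact List.mem_reverse.mpr hyac
  -- x ∈ P c y
  have hxca : x ∈ P hT c a := by rw [P_rev hT]; exact List.mem_reverse.mpr hxac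
  have hxcy : x ∈ P hT c y := by
    rw [P_split hT hyca] at hxca
    rcases List.mem_append.mp hxca with h | h
    · exact h
    · exfalso
      have : x ∈ P hT y a := List.tail_subset _ h
      rw [P_rev hT] at this
      exact hnx (List.mem_reverse.mp this)
  -- contradiction with nodup of P c b
  have hsplit2 : P hT c b = P hT c y ++ (P hT y b).tail := P_split hT hycb
  have hnd : (P hT c b).Nodup := P_nodup hT c b
  rw [hsplit2] at hnd
  exact (List.disjoint_of_nodup_append hnd) hxcy hxyb

open Classical in
/-- Key smoothness step. -/
lemma op_prefix {u b y : V} (hy : y ∈ P hT u b)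
    (hx : op G hT u b ∈ P hT u y) : op G hT u y = op G hT u b := by
  have hsplit : P hT u b = P hT u y ++ (P hT y b).tail := P_split hT hy
  by_cases hf : (P hT y b).tail.filter (fun z => G.Adj u z) = []
  · rw [op, op, hsplit, List.filter_append, hf, List.append_nil]
  · exfalso
    have h2 : op G hT u b ∈ (P hT y b).tail := by
      have : ((P hT u y ++ (P hT y b).tail).filter (fun z => G.Adj u z)).getLast?
          = ((P hT y b).tail.filter (fun z => G.Adj u z)).getLast? := by
        rw [List.filter_append]
        exact List.getLast?_append_of_ne_nil _ hf
      have hmem : op G hT u b ∈ (P hT y b).tail.filter (fun z => G.Adj u z) := by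
        rw [op, hsplit, this]
        have hl := List.getLast?_eq_getLast hf
        rw [hl, Option.getD_some]
        exact List.getLast_mem hf
      exact (List.mem_filter.mp hmem).1
    have hnd : (P hT u b).Nodup := P_nodup hT u b
    rw [hsplit] at hnd
    exact (List.disjoint_of_nodup_append hnd) hx h2

end
end STG

theorem exists_smooth_travel_groupoid {V : Type*} [Fintype V]
    (G : SimpleGraph V) (hconn : G.Connected) :
    ∃ op : V → V → V,
      (∀ u v : V, op (op u v) u = u) ∧
      (∀ u v : V, op (op u v) v = u → u = v) ∧
      (∀ u v w : V, op u v = op u w → op u (op w v) = op u v) ∧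
      (∀ u v : V, G.Adj u v ↔ u ≠ v ∧ op u v = v) := by
  classical
  haveI : Nonempty V := hconn.nonempty
  set r : V := Classical.arbitrary V with hr
  have hpex : ∀ v : V, ∃ u, v ≠ r → (G.Adj v u ∧ G.dist r u < G.dist r v) := by
    intro v
    by_cases hv : v = r
    · exact ⟨v, fun h => absurd hv h⟩
    · obtain ⟨q, hq⟩ := hconn.exists_walk_length_eq_dist r v
      obtain ⟨u, h, q', hq'⟩ := SimpleGraph.Walk.exists_eq_cons_of_ne hv q.reverse
      refine ⟨u, fun _ => ⟨h, ?_⟩⟩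
      have h1 : G.dist r u ≤ q'.reverse.length := G.dist_le _
      have h2 : q.reverse.length = q'.length + 1 := by rw [hq']; simp
      have h3 : q.reverse.length = q.length := q.length_reverse
      have h4 : 0 < G.dist r v := hconn.pos_dist_of_ne (Ne.symm hv)
      rw [SimpleGraph.Walk.length_reverse] at h1
      omega
  set p : V → V := fun v => (hpex v).choose with hpdef
  have hp : ∀ v, v ≠ r → G.Adj v (p v) := fun v hv => ((hpex v).choose_spec hv).1
  have hd : ∀ v, v ≠ r → G.dist r (p v) < G.dist r v := fun v hv => ((hpex v).choose_spec hv).2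
  have hT : (STG.T G r p hp).IsTree := ⟨STG.T_connected G r p hp hd, STG.T_acyclic hp hd⟩
  have hle : STG.T G r p hp ≤ G := STG.T_le G r p hp
  refine ⟨STG.op G hT, ?_, ?_, ?_, ?_⟩
  · -- t1
    intro u v
    by_cases h : u = v
    · subst h; rw [STG.op_self hT, STG.op_self hT]
    · exact STG.op_eq_of_adj hT ((STG.op_mem_adj hle hT h).2.symm)
  · -- t2
    intro u v h
    by_contra hne
    obtain ⟨hmem, hadj⟩ := STG.op_mem_adj hle hT hne
    set x := STG.op G hT u v with hx
    have hxu : x ≠ u := fun he => G.irrefl (he ▸ hadj)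
    by_cases hxv : x = v
    · rw [hxv, STG.op_self hT] at h; exact hne h.symm
    · have h2 : u ∈ STG.P hT x v := h ▸ (STG.op_mem_adj hle hT hxv).1
      have h3 : u ∈ (STG.P hT x v).tail := by
        rw [STG.P_head hT x v, List.mem_cons] at h2
        rcases h2 with h4 | h4
        · exact absurd h4.symm hxu
        · exact h4
      have hsplit := STG.P_split hT hmem
      have hnd := STG.P_nodup hT u v
      rw [hsplit] at hnd
      exact (List.disjoint_of_nodup_append hnd) (STG.start_mem_P hT u x) h3
  · -- t4 (smoothness)
    intro u v w h
    by_cases huv : u = v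
    · subst huv
      rw [STG.op_self hT] at h ⊢
      have huw : u = w := (STG.op_eq_self_iff hle hT).mp h.symm
      subst huw
      rw [STG.op_self hT, STG.op_self hT]
    by_cases huw : u = w
    · subst huw
      rw [STG.op_self hT] at h
      exact absurd ((STG.op_eq_self_iff hle hT).mp h) huv
    by_cases hvw : v = w
    · subst hvw; rw [STG.op_self hT]
    · have hwv : w ≠ v := Ne.symm hvw
      obtain ⟨hyP, hyadj⟩ := STG.op_mem_adj hle hT hwv
      obtain ⟨hxv, _⟩ := STG.op_mem_adj hle hT huv
      obtain ⟨hxw, _⟩ := STG.op_mem_adj hle hT huw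
      have hxw' : STG.op G hT u v ∈ STG.P hT u w := by rw [h]; exact hxw
      rcases STG.P_union hT u hyP with hA | hB
      · -- op w v ∈ P w u
        have hA' : STG.op G hT w v ∈ STG.P hT u w := by
          rw [STG.P_rev hT] at hA; exact List.mem_reverse.mp hA
        have hyvw : STG.op G hT w v ∈ STG.P hT v w := by
          rw [STG.P_rev hT]; exact List.mem_reverse.mpr hyP
        have hx_in := STG.mem_P_of_between hT hxw' hxv hA' hyvw
        have := STG.op_prefix hT hA' (h ▸ hx_in)
        rw [this, ← h]
      · -- op w v ∈ P u v
        have hx_in := STG.mem_P_of_between hT hxv hxw' hB hyP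
        exact STG.op_prefix hT hB hx_in
  · -- edges
    intro u v
    constructor
    · intro hadj
      exact ⟨hadj.ne, STG.op_eq_of_adj hT hadj⟩
    · rintro ⟨hne, hop⟩
      have := (STG.op_mem_adj hle hT hne).2
      rwa [hop] at this
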